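/- Let c_n be complex with Σ|c_n|² = 1, F₁ = Σ n|c_n|² > 0, F₂ = Σ n²|c_n|² < ∞, and γ > 0. By Cauchy–Schwarz, (Σ_{n≥1} |c_n|² n e^{-γn})² ≤ (Σ_{k≥1} |c_k|² k e^{-2γk})(Σ_{k≥1} |c_k|² k), and the quantity D = 2√(1 − (Σ|c_n|² n e^{-γn})²/((Σ|c_k|² k e^{-2γk})(Σ|c_k|² k))) satisfies D ≤ 2√(1 − ((F₁ − γF₂)/F₁)²) < √(8γF₂/F₁) whenever γF₂ < F₁. -/
import Mathlib


/-- Analytic chain of inequalities behind Proposition 5: Cauchy–Schwarz for the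
weighted sums, and the bound `D ≤ 2√(1-((F₁-γF₂)/F₁)²) < √(8γF₂/F₁)`. -/
theorem stmt_13 (c : ℕ → ℂ) (γ F₁ F₂ : ℝ) (hγ : 0 < γ)
    (hnorm : ∑' n : ℕ, ‖c n‖^2 = 1)
    (hF₁ : HasSum (fun n : ℕ => (n : ℝ) * ‖c n‖^2) F₁) (hF₁pos : 0 < F₁)
    (hF₂ : HasSum (fun n : ℕ => (n : ℝ)^2 * ‖c n‖^2) F₂)
    (hsmall : γ * F₂ < F₁) :
    (∑' n : ℕ, ‖c n‖^2 * (n : ℝ) * Real.exp (-γ*(n : ℝ)))^2 ≤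
      (∑' n : ℕ, ‖c n‖^2 * (n : ℝ) * Real.exp (-2*γ*(n : ℝ))) *
        (∑' n : ℕ, ‖c n‖^2 * (n : ℝ)) ∧
    2 * Real.sqrt (1 -
        (∑' n : ℕ, ‖c n‖^2 * (n : ℝ) * Real.exp (-γ*(n : ℝ)))^2 /
          ((∑' n : ℕ, ‖c n‖^2 * (n : ℝ) * Real.exp (-2*γ*(n : ℝ))) *
            (∑' n : ℕ, ‖c n‖^2 * (n : ℝ))))
      ≤ 2 * Real.sqrt (1 - ((F₁ - γ*F₂)/F₁)^2) ∧
    2 * Real.sqrt (1 - ((F₁ - γ*F₂)/F₁)^2) < Real.sqrt (8*γ*F₂/F₁) := by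
  set x : ℕ → ℝ := fun n => ‖c n‖^2 * (n : ℝ) * Real.exp (-γ*(n : ℝ)) with hxdef
  set y : ℕ → ℝ := fun n => ‖c n‖^2 * (n : ℝ) * Real.exp (-2*γ*(n : ℝ)) with hydef
  set z : ℕ → ℝ := fun n => ‖c n‖^2 * (n : ℝ) with hzdef
  have hz : HasSum z F₁ := by
    simpa [hzdef, mul_comm] using hF₁
  have hx0 : ∀ n, 0 ≤ x n := fun n =>
    mul_nonneg (mul_nonneg (sq_nonneg _) (Nat.cast_nonneg n)) (Real.exp_pos _).le
  have hy0 : ∀ n, 0 ≤ y n := fun n =>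
    mul_nonneg (mul_nonneg (sq_nonneg _) (Nat.cast_nonneg n)) (Real.exp_pos _).le
  have hz0 : ∀ n, 0 ≤ z n := fun n => mul_nonneg (sq_nonneg _) (Nat.cast_nonneg n)
  have hxle : ∀ n, x n ≤ z n := by
    intro n
    have h1 : Real.exp (-γ*(n:ℝ)) ≤ 1 := Real.exp_le_one_iff.mpr (by
      have : (0:ℝ) ≤ γ*(n:ℝ) := mul_nonneg hγ.le (Nat.cast_nonneg n)
      linarith)
    calc x n ≤ ‖c n‖^2 * (n:ℝ) * 1 := by
          exact mul_le_mul_of_nonneg_left h1 (mul_nonneg (sq_nonneg _) (Nat.cast_nonneg n))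
      _ = z n := by ring
  have hyle : ∀ n, y n ≤ z n := by
    intro n
    have h1 : Real.exp (-2*γ*(n:ℝ)) ≤ 1 := Real.exp_le_one_iff.mpr (by
      have : (0:ℝ) ≤ γ*(n:ℝ) := mul_nonneg hγ.le (Nat.cast_nonneg n)
      linarith)
    calc y n ≤ ‖c n‖^2 * (n:ℝ) * 1 := by
          exact mul_le_mul_of_nonneg_left h1 (mul_nonneg (sq_nonneg _) (Nat.cast_nonneg n))
      _ = z n := by ring
  have hxs : Summable x := hz.summable.of_nonneg_of_le hx0 hxle
  have hys : Summable y := hz.summable.of_nonneg_of_le hy0 hyle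
  -- Cauchy–Schwarz pointwise identity
  have key : ∀ i : ℕ, x i ^ 2 = y i * z i := by
    intro i
    have h2 : Real.exp (-γ*(i:ℝ)) * Real.exp (-γ*(i:ℝ)) = Real.exp (-2*γ*(i:ℝ)) := by
      rw [← Real.exp_add]; ring_nf
    calc x i ^ 2 = (Real.exp (-γ*(i:ℝ)) * Real.exp (-γ*(i:ℝ))) *
          (‖c i‖^2 * (i:ℝ) * (‖c i‖^2 * (i:ℝ))) := by simp only [hxdef]; ring
      _ = y i * z i := by rw [h2]; simp only [hydef, hzdef]; ring
  have hTy : 0 ≤ ∑' n, y n := tsum_nonneg hy0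
  have hTz : 0 ≤ ∑' n, z n := tsum_nonneg hz0
  have hCS : (∑' n, x n)^2 ≤ (∑' n, y n) * (∑' n, z n) := by
    have hsq : ∀ s : Finset ℕ, ∑ i ∈ s, x i ≤ Real.sqrt ((∑' n, y n) * (∑' n, z n)) := by
      intro s
      have h1 : (∑ i ∈ s, x i)^2 ≤ (∑ i ∈ s, y i) * (∑ i ∈ s, z i) :=
        Finset.sum_sq_le_sum_mul_sum_of_sq_eq_mul s (fun i _ => hy0 i) (fun i _ => hz0 i)
          (fun i _ => key i)
      have h2 : (∑ i ∈ s, y i) ≤ ∑' n, y n := Summable.sum_le_tsum s (fun i _ => hy0 i) hys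
      have h3 : (∑ i ∈ s, z i) ≤ ∑' n, z n := Summable.sum_le_tsum s (fun i _ => hz0 i) hz.summable
      have h4 : (∑ i ∈ s, x i)^2 ≤ (∑' n, y n) * (∑' n, z n) :=
        h1.trans (mul_le_mul h2 h3 (Finset.sum_nonneg fun i _ => hz0 i) hTy)
      have h5 : 0 ≤ ∑ i ∈ s, x i := Finset.sum_nonneg fun i _ => hx0 i
      exact (Real.le_sqrt h5 (mul_nonneg hTy hTz)).mpr h4
    have h6 : (∑' n, x n) ≤ Real.sqrt ((∑' n, y n) * (∑' n, z n)) :=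
      Summable.tsum_le_of_sum_le hxs hsq
    have h7 : 0 ≤ ∑' n, x n := tsum_nonneg hx0
    calc (∑' n, x n)^2 ≤ Real.sqrt ((∑' n, y n) * (∑' n, z n))^2 := by
          exact pow_le_pow_left₀ h7 h6 2
      _ = (∑' n, y n) * (∑' n, z n) := Real.sq_sqrt (mul_nonneg hTy hTz)
  refine ⟨hCS, ?_, ?_⟩
  · -- second inequality
    have hS3 : (∑' n, z n) = F₁ := hz.tsum_eq
    -- lower bound on S1
    have hw : HasSum (fun n : ℕ => (n:ℝ) * ‖c n‖^2 - γ * ((n:ℝ)^2 * ‖c n‖^2))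
        (F₁ - γ * F₂) := hF₁.sub (hF₂.mul_left γ)
    have hS1lb : F₁ - γ*F₂ ≤ ∑' n, x n := by
      rw [← hw.tsum_eq]
      refine Summable.tsum_le_tsum (fun n => ?_) hw.summable hxs
      have he := Real.add_one_le_exp (-γ*(n:ℝ))
      have hcn : (0:ℝ) ≤ ‖c n‖^2 * (n:ℝ) := mul_nonneg (sq_nonneg _) (Nat.cast_nonneg n)
      simp only [hxdef]
      nlinarith [mul_le_mul_of_nonneg_left he hcn]
    have hS1pos : 0 < ∑' n, x n := lt_of_lt_of_le (by linarith) hS1lb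
    have hS2le : (∑' n, y n) ≤ F₁ := by
      rw [← hS3]; exact Summable.tsum_le_tsum hyle hys hz.summable
    have hS2pos : 0 < ∑' n, y n := by nlinarith [hCS, hS1pos, hS3]
    have hB : ((F₁ - γ*F₂)/F₁)^2 ≤ (∑' n, x n)^2 / ((∑' n, y n) * (∑' n, z n)) := by
      rw [div_pow]
      refine div_le_div₀ (sq_nonneg _) ?_ ?_ ?_
      · exact pow_le_pow_left₀ (by linarith) hS1lb 2
      · rw [hS3]; positivity
      · rw [hS3]; nlinarith
    have h1 : (1 : ℝ) - (∑' n, x n)^2 / ((∑' n, y n) * (∑' n, z n)) ≤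
        1 - ((F₁ - γ*F₂)/F₁)^2 := by linarith
    exact mul_le_mul_of_nonneg_left (Real.sqrt_le_sqrt h1) (by norm_num)
  · -- third inequality
    have hF₂pos : 0 < F₂ := by
      have h12 : F₁ ≤ F₂ := by
        refine hasSum_le (fun n => ?_) hF₁ hF₂
        have : (n:ℝ) ≤ (n:ℝ)^2 := by
          rcases Nat.eq_zero_or_pos n with h | h
          · simp [h]
          · nlinarith [(Nat.one_le_cast (α := ℝ)).mpr h]
        exact mul_le_mul_of_nonneg_right this (sq_nonneg _)
      linarith
    set t : ℝ := γ*F₂/F₁ with htdef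
    have ht : 0 < t := by positivity
    have ht1 : t < 1 := (div_lt_one hF₁pos).mpr hsmall
    have hBt : (F₁ - γ*F₂)/F₁ = 1 - t := by
      rw [htdef]; field_simp
    rw [hBt]
    have harg : 0 ≤ 1 - (1-t)^2 := by nlinarith
    have hlt : 4 * (1 - (1-t)^2) < 8*γ*F₂/F₁ := by
      have : 8*γ*F₂/F₁ = 8*t := by rw [htdef]; ring
      rw [this]; nlinarith [mul_pos ht ht]
    have h2sqrt : 2 * Real.sqrt (1 - (1-t)^2) = Real.sqrt (4 * (1 - (1-t)^2)) := by
      rw [Real.sqrt_mul (by norm_num : (0:ℝ) ≤ 4),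
        show Real.sqrt 4 = 2 by
          rw [show (4:ℝ) = 2^2 by norm_num, Real.sqrt_sq (by norm_num : (0:ℝ) ≤ 2)]]
    rw [h2sqrt]
    exact Real.sqrt_lt_sqrt (by linarith) hlt
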